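/- Let K ⊆ ℝ^n be a closed convex cone, L ⊆ ℝ^n a linear subspace, and c ∈ ℝ^n. Then the feasibility problem (K, L, c) is strongly infeasible (i.e., K ∩ (L + c) = ∅ and dist(K, L + c) > 0) if and only if there exists w ∈ K* ∩ L^⊥ with w^T c = −1. -/
import Mathlib


open scoped RealInnerProductSpace

/-- The distance between two sets. -/
noncomputable def setDist {V : Type*} [NormedAddCommGroup V] (A B : Set V) : ℝ :=
  sInf (Set.image2 dist A B)

/-- **Characterization of strong infeasibility.**
Let `K ⊆ ℝ^n` be a closed convex cone, `L ⊆ ℝ^n` a linear subspace and `c ∈ ℝ^n`.  Then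
`(K, L, c)` is strongly infeasible (i.e. `K ∩ (L + c) = ∅` and `dist(K, L + c) > 0`) if and
only if there exists `w ∈ K* ∩ L^⊥` with `wᵀc = -1`. -/
theorem strongly_infeasible_iff {n : ℕ}
    (K : Set (EuclideanSpace ℝ (Fin n))) (L : Submodule ℝ (EuclideanSpace ℝ (Fin n)))
    (c : EuclideanSpace ℝ (Fin n))
    (hKclosed : IsClosed K) (hKconv : Convex ℝ K) (hK0 : (0 : EuclideanSpace ℝ (Fin n)) ∈ K)
    (hKcone : ∀ x ∈ K, ∀ t : ℝ, 0 ≤ t → t • x ∈ K) :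
    (K ∩ {x | x - c ∈ L} = ∅ ∧ 0 < setDist K {x | x - c ∈ L}) ↔
      ∃ w, (∀ z ∈ K, 0 ≤ ⟪w, z⟫) ∧ w ∈ Lᗮ ∧ ⟪w, c⟫ = (-1 : ℝ) := by
  constructor
  · rintro ⟨-, hd⟩
    set d := setDist K {x | x - c ∈ L} with hd_def
    set S : Set (EuclideanSpace ℝ (Fin n)) := {x | ∃ k ∈ K, ∃ l ∈ L, x = k - l} with hS
    have hSconv : Convex ℝ S := by
      rintro x ⟨k, hk, l, hl, rfl⟩ y ⟨k', hk', l', hl', rfl⟩ a b ha hb hab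
      exact ⟨a • k + b • k', hKconv hk hk' ha hb hab, a • l + b • l',
        L.add_mem (L.smul_mem _ hl) (L.smul_mem _ hl'), by module⟩
    have h0S : (0 : EuclideanSpace ℝ (Fin n)) ∈ S := ⟨0, hK0, 0, L.zero_mem, by simp⟩
    -- every point of S is at distance ≥ d from c
    have hdS : ∀ s ∈ S, d ≤ dist c s := by
      rintro s ⟨k, hk, l, hl, rfl⟩
      have hmem : dist k (l + c) ∈ Set.image2 dist K {x | x - c ∈ L} :=
        Set.mem_image2_of_mem hk (by simp [hl])
      have hbdd : BddBelow (Set.image2 dist K {x | x - c ∈ L}) :=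
        ⟨0, by rintro r ⟨a, -, b, -, rfl⟩; exact dist_nonneg⟩
      have h1 : d ≤ dist k (l + c) := csInf_le hbdd hmem
      have : dist c (k - l) = dist k (l + c) := by
        rw [dist_eq_norm, dist_eq_norm]
        rw [show c - (k - l) = -(k - (l + c)) by abel, norm_neg]
      linarith [h1, this.ge]
    obtain ⟨v, hvC, hvmin⟩ := exists_norm_eq_iInf_of_complete_convex
      ⟨0, subset_closure h0S⟩ isClosed_closure.isComplete hSconv.closure c
    have hvar := (norm_eq_iInf_iff_real_inner_le_zero hSconv.closure hvC).1 hvmin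
    -- v is at distance ≥ d from c
    have hdv : d ≤ dist c v := by
      have hclosed : IsClosed {x : EuclideanSpace ℝ (Fin n) | d ≤ dist c x} :=
        isClosed_le continuous_const (continuous_const.dist continuous_id)
      exact closure_minimal hdS hclosed hvC
    have hw0ne : v - c ≠ 0 := by
      have : (0 : ℝ) < dist c v := lt_of_lt_of_le hd hdv
      rw [dist_eq_norm] at this
      intro h
      rw [show c - v = -(v - c) by abel, h] at this
      simp at this
    have h2v : (2 : ℝ) • v ∈ closure S := by
      refine map_mem_closure (continuous_const_smul (2 : ℝ)) hvC ?_
      rintro x ⟨k, hk, l, hl, rfl⟩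
      exact ⟨(2 : ℝ) • k, hKcone k hk 2 (by norm_num), (2 : ℝ) • l, L.smul_mem _ hl, by module⟩
    have hv0 : ⟪c - v, v⟫ = 0 := by
      have h1 := hvar 0 (subset_closure h0S)
      have h2 := hvar _ h2v
      rw [zero_sub, inner_neg_right] at h1
      rw [show (2 : ℝ) • v - v = v by module] at h2
      linarith
    have hpos : ∀ z ∈ closure S, 0 ≤ ⟪v - c, z⟫ := by
      intro z hz
      have h := hvar z hz
      rw [inner_sub_right] at h
      have hz' : ⟪c - v, z⟫ ≤ 0 := by linarith
      have heq : ⟪v - c, z⟫ = -⟪c - v, z⟫ := by rw [← neg_sub c v, inner_neg_left]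
      linarith
    have hKpos : ∀ z ∈ K, 0 ≤ ⟪v - c, z⟫ := fun z hz =>
      hpos z (subset_closure ⟨z, hz, 0, L.zero_mem, by simp⟩)
    have hLzero : ∀ l ∈ L, ⟪v - c, l⟫ = 0 := by
      intro l hl
      have h1 : 0 ≤ ⟪v - c, l⟫ := hpos l (subset_closure ⟨0, hK0, -l, L.neg_mem hl, by simp⟩)
      have h2 : 0 ≤ ⟪v - c, -l⟫ := hpos (-l) (subset_closure ⟨0, hK0, l, hl, by simp⟩)
      rw [inner_neg_right] at h2
      linarith
    have hvv : ⟪v - c, v⟫ = 0 := by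
      rw [show v - c = -(c - v) by abel, inner_neg_left, hv0, neg_zero]
    have hcc : ⟪v - c, c⟫ = -(‖v - c‖ ^ 2) := by
      have h1 : ⟪v - c, v - c⟫ = ⟪v - c, v⟫ - ⟪v - c, c⟫ := inner_sub_right _ _ _
      have h2 : ⟪v - c, v - c⟫ = ‖v - c‖ ^ 2 := real_inner_self_eq_norm_sq _
      linarith [h1, h2, hvv]
    have hn2 : (0 : ℝ) < ‖v - c‖ ^ 2 := by
      have := norm_pos_iff.2 hw0ne
      positivity
    refine ⟨(‖v - c‖ ^ 2)⁻¹ • (v - c), ?_, ?_, ?_⟩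
    · intro z hz
      rw [real_inner_smul_left]
      exact mul_nonneg (by positivity) (hKpos z hz)
    · intro l hl
      rw [real_inner_smul_right, real_inner_comm, hLzero l hl, mul_zero]
    · rw [real_inner_smul_left, hcc]
      field_simp
  · rintro ⟨w, hwK, hwL, hwc⟩
    have hwne : w ≠ 0 := by
      intro h
      rw [h] at hwc
      simp at hwc
    have hwpos : (0 : ℝ) < ‖w‖ := norm_pos_iff.2 hwne
    have key : ∀ k ∈ K, ∀ y, y - c ∈ L → ‖w‖⁻¹ ≤ dist k y := by
      intro k hk y hy
      have h1 : ⟪w, y - c⟫ = 0 := by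
        rw [real_inner_comm]
        exact (Submodule.mem_orthogonal L w).1 hwL _ hy
      have h2 : ⟪w, y⟫ = -1 := by
        rw [inner_sub_right] at h1
        linarith [hwc, h1]
      have h3 : (1 : ℝ) ≤ ⟪w, k - y⟫ := by
        rw [inner_sub_right, h2]
        linarith [hwK k hk]
      have h4 : ⟪w, k - y⟫ ≤ ‖w‖ * ‖k - y‖ := real_inner_le_norm _ _
      rw [dist_eq_norm]
      rw [inv_le_iff_one_le_mul₀ hwpos]
      linarith
    constructor
    · rw [Set.eq_empty_iff_forall_notMem]
      rintro x ⟨hxK, hxL⟩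
      have := key x hxK x hxL
      simp [dist_self] at this
      have : ‖w‖⁻¹ > 0 := by positivity
      linarith [key x hxK x hxL, dist_self x]
    · have hne : (Set.image2 dist K {x | x - c ∈ L}).Nonempty :=
        ⟨dist 0 c, Set.mem_image2_of_mem hK0 (by simp)⟩
      have hle : ‖w‖⁻¹ ≤ setDist K {x | x - c ∈ L} := by
        apply le_csInf hne
        rintro b ⟨k, hk, y, hy, rfl⟩
        exact key k hk y hy
      have : (0 : ℝ) < ‖w‖⁻¹ := by positivity
      linarith
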